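/- arXiv:2202.03974 — 5 statements merged into one kernel-verified Lean document; each statement's English description precedes it below -/
import Mathlib

section
/- Fix n ≥ 2, ε > 0, and B_0 with 0 < B_0 ≤ 1, and define τ_B and the sequence (B*_i)_{i=0}^{n−1} as in the context. Then for every 0 ≤ i ≤ n−2: B*_{i+1} = min( e^ε·B*_i , 1 − e^{−ε}·(1 − B*_i) ). -/
/-- The index threshold `τ_B = ⌊max(0, 1 − ln(B₀·(e^ε+1))/ε)⌋`. -/
noncomputable def tauB (ε B0 : ℝ) : ℕ :=
  ⌊max 0 (1 - Real.log (B0 * (Real.exp ε + 1)) / ε)⌋₊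

/-- The index threshold `τ_R = ⌊max(0, 1 − ln((B₀+R₀)·(e^ε+1))/ε)⌋`. -/
noncomputable def tauR (ε B0 R0 : ℝ) : ℕ :=
  ⌊max 0 (1 - Real.log ((B0 + R0) * (Real.exp ε + 1)) / ε)⌋₊

/-- The optimal blue probabilities: `B*_i = e^{iε}·B₀` for `i ≤ τ_B` and
`B*_i = 1 − e^{(τ_B−i)ε} + e^{(2τ_B−i)ε}·B₀` for `i > τ_B`. -/
noncomputable def Bstar (ε B0 : ℝ) (i : ℕ) : ℝ :=
  if i ≤ tauB ε B0 then Real.exp (i * ε) * B0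
  else 1 - Real.exp (((tauB ε B0 : ℝ) - i) * ε)
       + Real.exp ((2 * (tauB ε B0 : ℝ) - i) * ε) * B0

/-- `R_Mid(i) = 1 − e^{−(i−τ_R)ε} − e^{iε}·B₀ + e^{−(i−2τ_R)ε}·(B₀+R₀)`. -/
noncomputable def RMid (ε B0 R0 : ℝ) (i : ℕ) : ℝ :=
  1 - Real.exp (-(((i : ℝ) - (tauR ε B0 R0 : ℝ)) * ε))
    - Real.exp (i * ε) * B0
    + Real.exp (-(((i : ℝ) - 2 * (tauR ε B0 R0 : ℝ)) * ε)) * (B0 + R0)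

/-- The optimal red probabilities: `R*_i = e^{iε}·R₀` for `i ≤ τ_R`,
`R*_i = R_Mid(i)` for `τ_R < i ≤ τ_B`, and
`R*_i = e^{−(i−τ_B)ε}·R_Mid(τ_B)` for `i > τ_B`. -/
noncomputable def Rstar (ε B0 R0 : ℝ) (i : ℕ) : ℝ :=
  if i ≤ tauR ε B0 R0 then Real.exp (i * ε) * R0
  else if i ≤ tauB ε B0 then RMid ε B0 R0 i
  else Real.exp (-(((i : ℝ) - (tauB ε B0 : ℝ)) * ε)) * RMid ε B0 R0 (tauB ε B0)

/-- The optimal green probabilities `G*_i = 1 − B*_i − R*_i`. -/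
noncomputable def Gstar (ε B0 R0 : ℝ) (i : ℕ) : ℝ :=
  1 - Bstar ε B0 i - Rstar ε B0 R0 i

lemma key_ge (ε : ℝ) (hε : 0 < ε) (B0 : ℝ) (hB0 : 0 < B0) :
    1 ≤ Real.exp ((tauB ε B0 : ℝ) * ε) * (B0 * (Real.exp ε + 1)) := by
  have hpos : 0 < B0 * (Real.exp ε + 1) := by positivity
  have h1 : (1 : ℝ) - Real.log (B0 * (Real.exp ε + 1)) / ε < (tauB ε B0 : ℝ) + 1 :=
    lt_of_le_of_lt (le_max_right _ _) (Nat.lt_floor_add_one _)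
  have h2 : -(tauB ε B0 : ℝ) < Real.log (B0 * (Real.exp ε + 1)) / ε := by linarith
  have h3 : -(tauB ε B0 : ℝ) * ε < Real.log (B0 * (Real.exp ε + 1)) :=
    (lt_div_iff₀ hε).mp h2
  have h4 : (0:ℝ) ≤ (tauB ε B0 : ℝ) * ε + Real.log (B0 * (Real.exp ε + 1)) := by linarith
  calc (1:ℝ) = Real.exp 0 := Real.exp_zero.symm
    _ ≤ Real.exp ((tauB ε B0 : ℝ) * ε + Real.log (B0 * (Real.exp ε + 1))) :=
        Real.exp_le_exp.mpr h4
    _ = _ := by rw [Real.exp_add, Real.exp_log hpos]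

lemma key_le (ε : ℝ) (hε : 0 < ε) (B0 : ℝ) (hB0 : 0 < B0) (i : ℕ)
    (hi : i + 1 ≤ tauB ε B0) :
    Real.exp ((i : ℝ) * ε) * (B0 * (Real.exp ε + 1)) ≤ 1 := by
  set t := 1 - Real.log (B0 * (Real.exp ε + 1)) / ε with ht
  have hpos : 0 < B0 * (Real.exp ε + 1) := by positivity
  have hfl : (tauB ε B0 : ℝ) ≤ max 0 t := Nat.floor_le (le_max_left 0 t)
  have hmax : (i : ℝ) + 1 ≤ max 0 t := by
    have : ((i + 1 : ℕ) : ℝ) ≤ (tauB ε B0 : ℝ) := Nat.cast_le.mpr hi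
    push_cast at this; linarith
  have hit : (i : ℝ) + 1 ≤ t := by
    rcases le_total t 0 with h | h
    · rw [max_eq_left h] at hmax
      have : (0:ℝ) ≤ (i:ℝ) := Nat.cast_nonneg i
      linarith
    · rwa [max_eq_right h] at hmax
  have h2 : Real.log (B0 * (Real.exp ε + 1)) / ε ≤ -(i : ℝ) := by
    rw [ht] at hit; linarith
  have h3 : Real.log (B0 * (Real.exp ε + 1)) ≤ -(i : ℝ) * ε := (div_le_iff₀ hε).mp h2
  have h4 : (i : ℝ) * ε + Real.log (B0 * (Real.exp ε + 1)) ≤ 0 := by linarith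
  calc Real.exp ((i : ℝ) * ε) * (B0 * (Real.exp ε + 1))
      = Real.exp ((i : ℝ) * ε + Real.log (B0 * (Real.exp ε + 1))) := by
        rw [Real.exp_add, Real.exp_log hpos]
    _ ≤ Real.exp 0 := Real.exp_le_exp.mpr h4
    _ = 1 := Real.exp_zero

/-- The sequence `B*` satisfies the recurrence
`B*_{i+1} = min(e^ε·B*_i, 1 − e^{−ε}·(1 − B*_i))` for every `0 ≤ i ≤ n−2`. -/
theorem Bstar_recurrence (n : ℕ) (hn : 2 ≤ n) (ε : ℝ) (hε : 0 < ε)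
    (B0 : ℝ) (hB0 : 0 < B0) (hB0' : B0 ≤ 1) :
    ∀ i, i + 1 ≤ n - 1 →
      Bstar ε B0 (i + 1) =
        min (Real.exp ε * Bstar ε B0 i) (1 - Real.exp (-ε) * (1 - Bstar ε B0 i)) := by
  intro i _
  have hE : (1:ℝ) < Real.exp ε := by
    have := Real.add_one_le_exp ε; linarith
  have hEpos : (0:ℝ) < Real.exp ε := Real.exp_pos _
  have hF : Real.exp (-ε) * Real.exp ε = 1 := by rw [← Real.exp_add]; simp
  have hFpos : (0:ℝ) < Real.exp (-ε) := Real.exp_pos _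
  rcases le_or_gt (i + 1) (tauB ε B0) with h1 | h1
  · -- Case A : i + 1 ≤ τ
    have hiτ : i ≤ tauB ε B0 := le_trans (Nat.le_succ i) h1
    simp only [Bstar, if_pos h1, if_pos hiτ]
    have hk := key_le ε hε B0 hB0 i h1
    have hapos : (0:ℝ) < Real.exp ((i:ℝ) * ε) := Real.exp_pos _
    have hx : Real.exp (((i:ℕ)+1 : ℕ) * ε) = Real.exp ε * Real.exp ((i:ℝ) * ε) := by
      rw [← Real.exp_add]; congr 1; push_cast; ring
    have hle : Real.exp ε * (Real.exp ((i:ℝ) * ε) * B0)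
        ≤ 1 - Real.exp (-ε) * (1 - Real.exp ((i:ℝ) * ε) * B0) := by
      refine le_of_mul_le_mul_left ?_ hEpos
      have hFB : Real.exp ε * (Real.exp (-ε) * (1 - Real.exp ((i:ℝ) * ε) * B0))
          = 1 - Real.exp ((i:ℝ) * ε) * B0 := by
        rw [show Real.exp ε * (Real.exp (-ε) * (1 - Real.exp ((i:ℝ) * ε) * B0))
            = Real.exp (-ε) * Real.exp ε * (1 - Real.exp ((i:ℝ) * ε) * B0) by ring, hF, one_mul]
      nlinarith [mul_nonneg (by linarith : (0:ℝ) ≤ Real.exp ε - 1)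
        (by linarith : (0:ℝ) ≤ 1 - Real.exp ((i:ℝ) * ε) * (B0 * (Real.exp ε + 1))),
        mul_pos hapos hB0]
    rw [min_eq_left hle, hx]; ring
  · rcases eq_or_lt_of_le (Nat.lt_succ_iff.mp h1) with heq | hlt
    · -- Case B : τ = i
      subst heq
      set τ := tauB ε B0 with hτ
      have hk := key_ge ε hε B0 hB0
      rw [← hτ] at hk
      have hnot : ¬ (τ + 1 ≤ τ) := by omega
      simp only [Bstar, ← hτ, if_neg hnot, if_pos (le_refl τ)]
      have hapos : (0:ℝ) < Real.exp ((τ:ℝ) * ε) := Real.exp_pos _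
      have e1 : Real.exp (((τ:ℝ) - ((τ+1 : ℕ) : ℝ)) * ε) = Real.exp (-ε) := by
        congr 1; push_cast; ring
      have e2 : Real.exp ((2 * (τ:ℝ) - ((τ+1 : ℕ) : ℝ)) * ε)
          = Real.exp (-ε) * Real.exp ((τ:ℝ) * ε) := by
        rw [← Real.exp_add]; congr 1; push_cast; ring
      have hle : 1 - Real.exp (-ε) * (1 - Real.exp ((τ:ℝ) * ε) * B0)
          ≤ Real.exp ε * (Real.exp ((τ:ℝ) * ε) * B0) := by
        refine le_of_mul_le_mul_left ?_ hEpos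
        have hFB : Real.exp ε * (Real.exp (-ε) * (1 - Real.exp ((τ:ℝ) * ε) * B0))
            = 1 - Real.exp ((τ:ℝ) * ε) * B0 := by
          rw [show Real.exp ε * (Real.exp (-ε) * (1 - Real.exp ((τ:ℝ) * ε) * B0))
              = Real.exp (-ε) * Real.exp ε * (1 - Real.exp ((τ:ℝ) * ε) * B0) by ring, hF, one_mul]
        nlinarith [mul_nonneg (by linarith : (0:ℝ) ≤ Real.exp ε - 1)
          (by linarith : (0:ℝ) ≤ Real.exp ((τ:ℝ) * ε) * (B0 * (Real.exp ε + 1)) - 1),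
          mul_pos hapos hB0]
      rw [min_eq_right hle, e1, e2]; ring
    · -- Case C : τ < i
      have hnot1 : ¬ (i + 1 ≤ tauB ε B0) := by omega
      have hnot2 : ¬ (i ≤ tauB ε B0) := by omega
      simp only [Bstar, if_neg hnot1, if_neg hnot2]
      have hk := key_ge ε hε B0 hB0
      set τ := tauB ε B0 with hτ
      have hxpos : (0:ℝ) < Real.exp (((τ:ℝ) - i) * ε) := Real.exp_pos _
      have hTpos : (0:ℝ) < Real.exp ((τ:ℝ) * ε) := Real.exp_pos _
      have hxle : Real.exp (((τ:ℝ) - i) * ε) ≤ Real.exp (-ε) := by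
        apply Real.exp_le_exp.mpr
        have : (τ:ℝ) + 1 ≤ (i:ℝ) := by exact_mod_cast Nat.succ_le_of_lt hlt
        nlinarith
      have e1 : Real.exp (((τ:ℝ) - ((i+1:ℕ):ℝ)) * ε)
          = Real.exp (-ε) * Real.exp (((τ:ℝ) - i) * ε) := by
        rw [← Real.exp_add]; congr 1; push_cast; ring
      have e2 : Real.exp ((2 * (τ:ℝ) - ((i+1:ℕ):ℝ)) * ε)
          = Real.exp (-ε) * Real.exp ((2 * (τ:ℝ) - (i:ℝ)) * ε) := by
        rw [← Real.exp_add]; congr 1; push_cast; ring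
      have e3 : Real.exp ((2 * (τ:ℝ) - (i:ℝ)) * ε)
          = Real.exp (((τ:ℝ) - i) * ε) * Real.exp ((τ:ℝ) * ε) := by
        rw [← Real.exp_add]; congr 1; ring
      have hle : 1 - Real.exp (-ε) * (1 - (1 - Real.exp (((τ:ℝ) - i) * ε)
            + Real.exp ((2 * (τ:ℝ) - (i:ℝ)) * ε) * B0))
          ≤ Real.exp ε * (1 - Real.exp (((τ:ℝ) - i) * ε)
            + Real.exp ((2 * (τ:ℝ) - (i:ℝ)) * ε) * B0) := by
        set x := Real.exp (((τ:ℝ) - i) * ε)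
        set T := Real.exp ((τ:ℝ) * ε)
        set B := 1 - x + Real.exp ((2 * (τ:ℝ) - (i:ℝ)) * ε) * B0 with hB
        rw [e3] at hB
        -- first : (E+1) * B ≥ E
        have hB1 : Real.exp ε ≤ (Real.exp ε + 1) * B := by
          rw [hB]
          nlinarith [mul_nonneg hxpos.le (by nlinarith : (0:ℝ) ≤ T * (B0 * (Real.exp ε + 1)) - 1),
            mul_nonneg hEpos.le (by linarith : (0:ℝ) ≤ Real.exp (-ε) - x)]
        refine le_of_mul_le_mul_left ?_ hEpos
        have hFB : Real.exp ε * (Real.exp (-ε) * (1 - B)) = 1 - B := by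
          rw [show Real.exp ε * (Real.exp (-ε) * (1 - B))
              = Real.exp (-ε) * Real.exp ε * (1 - B) by ring, hF, one_mul]
        nlinarith [mul_nonneg (by linarith : (0:ℝ) ≤ Real.exp ε - 1)
          (by linarith : (0:ℝ) ≤ (Real.exp ε + 1) * B - Real.exp ε),
          sq_nonneg (Real.exp ε - 1)]
      rw [min_eq_right hle, e1, e2, e3]
      ring
end

section
/- Fix n ≥ 2, ε > 0, and B_0 with 0 < B_0 ≤ 1, and define τ_B and the sequence (B*_i)_{i=0}^{n−1} as in the context. Then the sequence (B*_i) is non-decreasing in i and satisfies 0 < B*_i ≤ 1 for every 0 ≤ i ≤ n−1. -/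
lemma tauB_key (ε B0 : ℝ) (hε : 0 < ε) (hB0 : 0 < B0) (hB0' : B0 ≤ 1) :
    Real.exp ((tauB ε B0 : ℝ) * ε) * B0 ≤ 1 := by
  rcases Nat.eq_zero_or_pos (tauB ε B0) with h | h
  · simp [h, hB0']
  · set x := 1 - Real.log (B0 * (Real.exp ε + 1)) / ε with hxdef
    have hle : ((tauB ε B0 : ℕ) : ℝ) ≤ max 0 x := Nat.floor_le (le_max_left _ _)
    have h1 : (1:ℝ) ≤ max 0 x := le_trans (by exact_mod_cast h) hle
    have hx1 : (1:ℝ) ≤ x := by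
      rcases le_max_iff.mp h1 with h' | h'
      · linarith
      · exact h'
    have hτx : ((tauB ε B0 : ℕ) : ℝ) ≤ x := by
      rwa [max_eq_right (by linarith : (0:ℝ) ≤ x)] at hle
    have hlog : ((tauB ε B0 : ℕ) : ℝ) * ε + Real.log (B0 * (Real.exp ε + 1)) ≤ ε := by
      have := mul_le_mul_of_nonneg_right hτx hε.le
      rw [hxdef] at this
      field_simp at this
      nlinarith [this]
    have hpos : (0:ℝ) < B0 * (Real.exp ε + 1) := by positivity
    have := Real.exp_le_exp.mpr hlog
    rw [Real.exp_add, Real.exp_log hpos] at this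
    have hE : (0:ℝ) < Real.exp ε := Real.exp_pos ε
    nlinarith [Real.exp_pos ((tauB ε B0 : ℝ) * ε)]

lemma Bstar_eq (ε B0 : ℝ) (i : ℕ) (hi : tauB ε B0 ≤ i) :
    Bstar ε B0 i = 1 - Real.exp (((tauB ε B0 : ℝ) - i) * ε)
      * (1 - Real.exp ((tauB ε B0 : ℝ) * ε) * B0) := by
  unfold Bstar
  rcases eq_or_lt_of_le hi with h | h
  · subst h
    rw [if_pos le_rfl]
    have h0 : (((tauB ε B0 : ℕ):ℝ) - ((tauB ε B0 : ℕ):ℝ)) * ε = 0 := by ring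
    rw [h0, Real.exp_zero]
    ring
  · rw [if_neg (by omega)]
    have : (2 * (tauB ε B0 : ℝ) - i) * ε = ((tauB ε B0 : ℝ) - i) * ε + (tauB ε B0 : ℝ) * ε := by ring
    rw [this, Real.exp_add]
    ring


/-- The sequence `B*` is non-decreasing and satisfies `0 < B*_i ≤ 1`
for every `0 ≤ i ≤ n−1`. -/
theorem Bstar_monotone_and_bounded (n : ℕ) (hn : 2 ≤ n) (ε : ℝ) (hε : 0 < ε)
    (B0 : ℝ) (hB0 : 0 < B0) (hB0' : B0 ≤ 1) :
    (∀ i j, i ≤ j → j ≤ n - 1 → Bstar ε B0 i ≤ Bstar ε B0 j) ∧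
    (∀ i ≤ n - 1, 0 < Bstar ε B0 i ∧ Bstar ε B0 i ≤ 1) := by

  set τ := tauB ε B0 with hτ
  have hkey := tauB_key ε B0 hε hB0 hB0'
  have hc0 : 0 ≤ 1 - Real.exp ((τ:ℝ) * ε) * B0 := by linarith
  have hc1 : 1 - Real.exp ((τ:ℝ) * ε) * B0 < 1 := by
    nlinarith [Real.exp_pos ((τ:ℝ) * ε)]
  have hBle : ∀ i, i ≤ τ → Bstar ε B0 i = Real.exp (i * ε) * B0 := by
    intro i hi; unfold Bstar; rw [if_pos hi]
  constructor
  · intro i j hij _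
    rcases le_or_gt j τ with hj | hj
    · rw [hBle i (hij.trans hj), hBle j hj]
      have : (i:ℝ) * ε ≤ (j:ℝ) * ε := by
        apply mul_le_mul_of_nonneg_right _ hε.le; exact_mod_cast hij
      exact mul_le_mul_of_nonneg_right (Real.exp_le_exp.mpr this) hB0.le
    · rcases le_or_gt i τ with hi | hi
      · have step1 : Bstar ε B0 i ≤ Bstar ε B0 τ := by
          rw [hBle i hi, hBle τ le_rfl]
          have : (i:ℝ) * ε ≤ (τ:ℝ) * ε := by
            apply mul_le_mul_of_nonneg_right _ hε.le; exact_mod_cast hi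
          exact mul_le_mul_of_nonneg_right (Real.exp_le_exp.mpr this) hB0.le
        have step2 : Bstar ε B0 τ ≤ Bstar ε B0 j := by
          rw [Bstar_eq ε B0 τ le_rfl, Bstar_eq ε B0 j hj.le]
          have hEj : Real.exp (((τ:ℝ) - j) * ε) ≤ Real.exp (((τ:ℝ) - τ) * ε) := by
            apply Real.exp_le_exp.mpr
            apply mul_le_mul_of_nonneg_right _ hε.le
            have : (τ:ℝ) ≤ (j:ℝ) := by exact_mod_cast hj.le
            linarith
          nlinarith
        exact step1.trans step2
      · rw [Bstar_eq ε B0 i hi.le, Bstar_eq ε B0 j (hi.le.trans hij)]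
        have hEj : Real.exp (((τ:ℝ) - j) * ε) ≤ Real.exp (((τ:ℝ) - i) * ε) := by
          apply Real.exp_le_exp.mpr
          apply mul_le_mul_of_nonneg_right _ hε.le
          have : (i:ℝ) ≤ (j:ℝ) := by exact_mod_cast hij
          linarith
        nlinarith
  · intro i _
    rcases le_or_gt i τ with hi | hi
    · rw [hBle i hi]
      constructor
      · positivity
      · have : Real.exp ((i:ℝ) * ε) * B0 ≤ Real.exp ((τ:ℝ) * ε) * B0 := by
          apply mul_le_mul_of_nonneg_right _ hB0.le
          apply Real.exp_le_exp.mpr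
          apply mul_le_mul_of_nonneg_right _ hε.le; exact_mod_cast hi
        linarith
    · rw [Bstar_eq ε B0 i hi.le]
      have hE1 : Real.exp (((τ:ℝ) - i) * ε) ≤ 1 := by
        apply Real.exp_le_one_iff.mpr  -- maybe wrong name
        apply mul_nonpos_of_nonpos_of_nonneg _ hε.le
        have : (τ:ℝ) ≤ (i:ℝ) := by exact_mod_cast hi.le
        linarith
      have hE0 : 0 < Real.exp (((τ:ℝ) - i) * ε) := Real.exp_pos _
      constructor
      · nlinarith
      · nlinarith
end

section
/- Fix n ≥ 2, ε > 0, and nonnegative B_0, R_0, G_0 with B_0 > 0 and B_0 + R_0 + G_0 = 1, and define τ_B and (B*_i) as in the context. Then every feasible sequence (B_i, R_i, G_i)_{i=0}^{n−1} satisfies B_i ≤ B*_i for all 0 ≤ i ≤ n−1. -/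
/-- The ε-DP feasibility constraints on the `n`-vertex path graph (vertices `0,…,n−1`,
all carrying the rainbow (blue, red, green)), with starting values `(B0, R0, G0)`:
all entries nonnegative and summing to `1`, and all ε-DP constraints between
consecutive vertices for all three colors. -/
def Feasible (n : ℕ) (ε B0 R0 G0 : ℝ) (B R G : ℕ → ℝ) : Prop :=
  B 0 = B0 ∧ R 0 = R0 ∧ G 0 = G0 ∧
  (∀ i ≤ n - 1, 0 ≤ B i ∧ 0 ≤ R i ∧ 0 ≤ G i ∧ B i + R i + G i = 1) ∧
  (∀ i, i + 1 ≤ n - 1 →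
    B i ≤ Real.exp ε * B (i + 1) ∧ B (i + 1) ≤ Real.exp ε * B i ∧
    R i ≤ Real.exp ε * R (i + 1) ∧ R (i + 1) ≤ Real.exp ε * R i ∧
    G i ≤ Real.exp ε * G (i + 1) ∧ G (i + 1) ≤ Real.exp ε * G i)

/-- Every feasible sequence satisfies `B_i ≤ B*_i` for all `0 ≤ i ≤ n−1`. -/
theorem feasible_blue_le_Bstar (n : ℕ) (hn : 2 ≤ n) (ε : ℝ) (hε : 0 < ε)
    (B0 R0 G0 : ℝ) (hB0 : 0 < B0) (hR0 : 0 ≤ R0) (hG0 : 0 ≤ G0)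
    (hsum : B0 + R0 + G0 = 1)
    (B R G : ℕ → ℝ) (hfeas : Feasible n ε B0 R0 G0 B R G) :
    ∀ i ≤ n - 1, B i ≤ Bstar ε B0 i := by
  obtain ⟨hB0eq, hR0eq, hG0eq, hnn, hdp⟩ := hfeas
  have hexp : (0:ℝ) < Real.exp ε := Real.exp_pos ε
  -- Upper bound B i ≤ e^{iε} B0
  have L1 : ∀ i ≤ n - 1, B i ≤ Real.exp (i * ε) * B0 := by
    intro i
    induction i with
    | zero => intro _; simp [hB0eq]
    | succ k ih =>
      intro hk
      have hk' : k ≤ n - 1 := by omega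
      have h1 := (hdp k hk).2.1
      calc B (k+1) ≤ Real.exp ε * B k := h1
        _ ≤ Real.exp ε * (Real.exp (k*ε) * B0) :=
            mul_le_mul_of_nonneg_left (ih hk') hexp.le
        _ = Real.exp ((k+1 : ℕ) * ε) * B0 := by
            rw [← mul_assoc, ← Real.exp_add]; push_cast; ring_nf
  -- Lower bound on 1 - B i
  have L2 : ∀ j i, j ≤ i → i ≤ n - 1 →
      Real.exp (((j:ℝ) - i) * ε) * (1 - B j) ≤ 1 - B i := by
    intro j i
    induction i with
    | zero =>
      intro hj _
      interval_cases j
      simp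
    | succ k ih =>
      intro hj hk
      rcases Nat.eq_or_lt_of_le hj with h | h
      · rw [← h]; simp
      · have hjk : j ≤ k := by omega
        have hk' : k ≤ n - 1 := by omega
        have hsumk := (hnn k hk').2.2.2
        have hsumk1 := (hnn (k+1) hk).2.2.2
        have hdpk := hdp k hk
        have hR : R k ≤ Real.exp ε * R (k+1) := hdpk.2.2.1
        have hG : G k ≤ Real.exp ε * G (k+1) := hdpk.2.2.2.2.1
        have key : 1 - B k ≤ Real.exp ε * (1 - B (k+1)) := by nlinarith
        have prev := ih hjk hk'
        have heq : Real.exp (((j:ℝ) - (k+1 : ℕ)) * ε)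
            = Real.exp (((j:ℝ) - k) * ε) / Real.exp ε := by
          rw [← Real.exp_sub]; push_cast; ring_nf
        rw [heq]
        rw [div_mul_eq_mul_div, div_le_iff₀ hexp]
        calc Real.exp (((j:ℝ) - k) * ε) * (1 - B j) ≤ 1 - B k := prev
          _ ≤ Real.exp ε * (1 - B (k+1)) := key
          _ = (1 - B (k+1)) * Real.exp ε := by ring
  intro i hi
  unfold Bstar
  by_cases hτ : i ≤ tauB ε B0
  · rw [if_pos hτ]; exact L1 i hi
  · rw [if_neg hτ]
    set τ := tauB ε B0 with hτdef
    have hτi : τ ≤ i := by omega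
    have hτn : τ ≤ n - 1 := le_trans hτi hi
    have h1 : B τ ≤ Real.exp (τ * ε) * B0 := L1 τ hτn
    have h2 := L2 τ i hτi hi
    have hpos : (0:ℝ) < Real.exp (((τ:ℝ) - i) * ε) := Real.exp_pos _
    have h3 : Real.exp (((τ:ℝ) - i) * ε) * (1 - Real.exp (τ * ε) * B0)
        ≤ Real.exp (((τ:ℝ) - i) * ε) * (1 - B τ) := by nlinarith
    have hprod : Real.exp (((τ:ℝ) - i) * ε) * Real.exp ((τ:ℝ) * ε)
        = Real.exp ((2 * (τ:ℝ) - i) * ε) := by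
      rw [← Real.exp_add]; ring_nf
    nlinarith [h3, h2, hprod]
end

section
/- Fix n ≥ 2, ε > 0, and nonnegative B_0, R_0, G_0 with B_0 > 0 and B_0 + R_0 + G_0 = 1, and define τ_B, τ_R, (B*_i), (R*_i), and G*_i = 1 − B*_i − R*_i as in the context. Then (B*_i, R*_i, G*_i)_{i=0}^{n−1} is itself a feasible sequence: all entries are nonnegative, B*_i + R*_i + G*_i = 1 for every i, (B*_0, R*_0, G*_0) = (B_0, R_0, G_0), and all the ε-DP constraints between consecutive indices hold for each of the three coordinates. -/
section AuxLemmas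

variable {ε B0 R0 : ℝ}

lemma tauR_eq_tauB : tauR ε B0 R0 = tauB ε (B0 + R0) := rfl

lemma tauB_key1 (hε : 0 < ε) (hB0 : 0 < B0) :
    1 < Real.exp ((tauB ε B0 : ℝ) * ε) * (B0 * (Real.exp ε + 1)) := by
  set τ : ℕ := tauB ε B0 with hτ
  have hpos : 0 < B0 * (Real.exp ε + 1) := by positivity
  have h := Nat.lt_floor_add_one (max 0 (1 - Real.log (B0 * (Real.exp ε + 1)) / ε))
  have h2 : 1 - Real.log (B0 * (Real.exp ε + 1)) / ε < (τ : ℝ) + 1 :=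
    lt_of_le_of_lt (le_max_right _ _) h
  have h3 : -Real.log (B0 * (Real.exp ε + 1)) < (τ : ℝ) * ε := by
    have h' : -(Real.log (B0 * (Real.exp ε + 1)) / ε) < (τ : ℝ) := by linarith
    calc -Real.log (B0 * (Real.exp ε + 1))
        = (-(Real.log (B0 * (Real.exp ε + 1)) / ε)) * ε := by field_simp
      _ < (τ : ℝ) * ε := mul_lt_mul_of_pos_right h' hε
  have h4 : Real.exp (-((τ:ℝ) * ε)) < B0 * (Real.exp ε + 1) := by
    rw [← Real.exp_log hpos]
    exact Real.exp_lt_exp.mpr (by linarith)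
  have h5 := mul_lt_mul_of_pos_left h4 (Real.exp_pos ((τ:ℝ) * ε))
  rwa [← Real.exp_add, add_neg_cancel, Real.exp_zero] at h5

lemma tauB_key2 (hε : 0 < ε) (hB0 : 0 < B0) (h1 : 1 ≤ tauB ε B0) :
    Real.exp (((tauB ε B0 : ℝ) - 1) * ε) * (B0 * (Real.exp ε + 1)) ≤ 1 := by
  set τ : ℕ := tauB ε B0 with hτ
  have hpos : 0 < B0 * (Real.exp ε + 1) := by positivity
  have hle : (τ : ℝ) ≤ max 0 (1 - Real.log (B0 * (Real.exp ε + 1)) / ε) :=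
    Nat.floor_le (le_max_left _ _)
  have h1' : (1:ℝ) ≤ (τ : ℝ) := by exact_mod_cast h1
  have h2 : (τ : ℝ) ≤ 1 - Real.log (B0 * (Real.exp ε + 1)) / ε := by
    rcases max_cases (0:ℝ) (1 - Real.log (B0 * (Real.exp ε + 1)) / ε) with ⟨he, _⟩ | ⟨he, _⟩
    · rw [he] at hle; linarith
    · rwa [he] at hle
  have h3 : ((τ:ℝ) - 1) * ε ≤ -Real.log (B0 * (Real.exp ε + 1)) := by
    have h' : (τ:ℝ) - 1 ≤ -(Real.log (B0 * (Real.exp ε + 1)) / ε) := by linarith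
    calc ((τ:ℝ) - 1) * ε ≤ (-(Real.log (B0 * (Real.exp ε + 1)) / ε)) * ε :=
          mul_le_mul_of_nonneg_right h' hε.le
      _ = -Real.log (B0 * (Real.exp ε + 1)) := by field_simp
  have h4 : Real.exp (((τ:ℝ) - 1) * ε) ≤ (B0 * (Real.exp ε + 1))⁻¹ := by
    rw [← Real.exp_log hpos, ← Real.exp_neg]
    exact Real.exp_le_exp.mpr h3
  calc Real.exp (((τ:ℝ) - 1) * ε) * (B0 * (Real.exp ε + 1))
      ≤ (B0 * (Real.exp ε + 1))⁻¹ * (B0 * (Real.exp ε + 1)) :=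
        mul_le_mul_of_nonneg_right h4 hpos.le
    _ = 1 := inv_mul_cancel₀ hpos.ne'

lemma tauB_mono {x y : ℝ} (hε : 0 < ε) (hx : 0 < x) (hxy : x ≤ y) :
    tauB ε y ≤ tauB ε x := by
  apply Nat.floor_le_floor
  apply max_le_max le_rfl
  have h : Real.log (x * (Real.exp ε + 1)) ≤ Real.log (y * (Real.exp ε + 1)) := by
    apply Real.log_le_log (by positivity)
    have h2 : (0:ℝ) < Real.exp ε + 1 := by positivity
    nlinarith
  have h3 : Real.log (x * (Real.exp ε + 1)) / ε ≤ Real.log (y * (Real.exp ε + 1)) / ε :=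
    div_le_div_of_nonneg_right h hε.le
  linarith

lemma expTauB_le_one (hε : 0 < ε) (hB0 : 0 < B0) (hB1 : B0 ≤ 1) :
    Real.exp ((tauB ε B0 : ℝ) * ε) * B0 ≤ 1 := by
  rcases Nat.eq_zero_or_pos (tauB ε B0) with h | h
  · rw [h]; simpa using hB1
  · have h2 := tauB_key2 hε hB0 h
    have h3 : Real.exp (((tauB ε B0:ℝ)) * ε) = Real.exp (((tauB ε B0:ℝ) - 1) * ε) * Real.exp ε := by
      rw [← Real.exp_add]; congr 1; ring
    have h4 : 0 < Real.exp (((tauB ε B0:ℝ) - 1) * ε) := Real.exp_pos _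
    nlinarith

lemma expTauB_le_E (hε : 0 < ε) (hB0 : 0 < B0) (h1 : 1 ≤ tauB ε B0) :
    Real.exp ((tauB ε B0 : ℝ) * ε) * B0 * (Real.exp ε + 1) ≤ Real.exp ε := by
  have h2 := tauB_key2 hε hB0 h1
  have h3 : Real.exp (((tauB ε B0:ℝ)) * ε) = Real.exp (((tauB ε B0:ℝ) - 1) * ε) * Real.exp ε := by
    rw [← Real.exp_add]; congr 1; ring
  have h5 : 0 < Real.exp ε := Real.exp_pos _
  rw [h3]
  nlinarith [mul_le_mul_of_nonneg_right h2 h5.le]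

lemma tauR_le_tauB (hε : 0 < ε) (hB0 : 0 < B0) (hR0 : 0 ≤ R0) :
    tauR ε B0 R0 ≤ tauB ε B0 := by
  rw [tauR_eq_tauB]; exact tauB_mono hε hB0 (by linarith)

end AuxLemmas
section FormLemmas
variable {ε B0 R0 : ℝ}

lemma Bstar_low {i : ℕ} (h : i ≤ tauB ε B0) :
    Bstar ε B0 i = Real.exp ((i:ℝ) * ε) * B0 := if_pos h

lemma Bstar_high {i : ℕ} (h : tauB ε B0 ≤ i) :
    Bstar ε B0 i = 1 - Real.exp (((tauB ε B0 : ℝ) - i) * ε) *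
      (1 - Real.exp ((tauB ε B0 : ℝ) * ε) * B0) := by
  rcases eq_or_lt_of_le h with h' | h'
  · rw [← h', Bstar, if_pos le_rfl, sub_self, zero_mul, Real.exp_zero]; ring
  · rw [Bstar, if_neg (by omega)]
    rw [show (2 * (tauB ε B0:ℝ) - i) * ε = ((tauB ε B0:ℝ) - i) * ε + (tauB ε B0:ℝ) * ε by ring,
      Real.exp_add]
    ring

lemma RMid_eq {i : ℕ} :
    RMid ε B0 R0 i = 1 - Real.exp (((tauR ε B0 R0 : ℝ) - i) * ε) *
      (1 - Real.exp ((tauR ε B0 R0 : ℝ) * ε) * (B0 + R0)) - Real.exp ((i:ℝ) * ε) * B0 := by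
  rw [RMid, show -(((i:ℝ) - (tauR ε B0 R0:ℝ)) * ε) = ((tauR ε B0 R0:ℝ) - i) * ε by ring,
    show -(((i:ℝ) - 2 * (tauR ε B0 R0:ℝ)) * ε)
      = ((tauR ε B0 R0:ℝ) - i) * ε + (tauR ε B0 R0:ℝ) * ε by ring, Real.exp_add]
  ring

lemma Rstar_low {i : ℕ} (h : i ≤ tauR ε B0 R0) :
    Rstar ε B0 R0 i = Real.exp ((i:ℝ) * ε) * R0 := if_pos h

lemma Rstar_eq_RMid {i : ℕ} (hl : tauR ε B0 R0 ≤ i) (hu : i ≤ tauB ε B0) :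
    Rstar ε B0 R0 i = RMid ε B0 R0 i := by
  rw [Rstar, if_pos hu]
  split_ifs with h1
  · have h' : i = tauR ε B0 R0 := le_antisymm h1 hl
    subst h'
    rw [RMid_eq, sub_self, zero_mul, Real.exp_zero]; ring
  · rfl

lemma Gstar_low {i : ℕ} (hε : 0 < ε) (hB0 : 0 < B0) (hR0 : 0 ≤ R0) (h : i ≤ tauR ε B0 R0) :
    Gstar ε B0 R0 i = 1 - Real.exp ((i:ℝ) * ε) * (B0 + R0) := by
  rw [Gstar, Bstar_low (h.trans (tauR_le_tauB hε hB0 hR0)), Rstar, if_pos h]; ring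

lemma Gstar_high {i : ℕ} (hε : 0 < ε) (hB0 : 0 < B0) (hR0 : 0 ≤ R0) (h : tauR ε B0 R0 ≤ i) :
    Gstar ε B0 R0 i = Real.exp (((tauR ε B0 R0 : ℝ) - i) * ε) *
      (1 - Real.exp ((tauR ε B0 R0 : ℝ) * ε) * (B0 + R0)) := by
  have hτ : tauR ε B0 R0 ≤ tauB ε B0 := tauR_le_tauB hε hB0 hR0
  rcases le_or_gt i (tauB ε B0) with hi | hi
  · rw [Gstar, Bstar_low hi, Rstar_eq_RMid h hi, RMid_eq]; ring
  · rw [Gstar, Bstar_high hi.le, Rstar, if_neg (by omega), if_neg (by omega),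
      show -(((i:ℝ) - (tauB ε B0:ℝ)) * ε) = ((tauB ε B0:ℝ) - i) * ε by ring,
      RMid_eq,
      show ((tauR ε B0 R0:ℝ) - i) * ε = ((tauB ε B0:ℝ) - i) * ε
        + ((tauR ε B0 R0:ℝ) - (tauB ε B0:ℝ)) * ε by ring, Real.exp_add,
      show ((tauR ε B0 R0:ℝ) - (tauB ε B0:ℝ)) * ε
        = ((tauR ε B0 R0:ℝ) - (tauB ε B0:ℕ)) * ε by norm_num]
    ring

lemma Bstar_rec {i : ℕ} (h : tauB ε B0 ≤ i) :
    Bstar ε B0 (i + 1) = 1 - Real.exp (-ε) * (1 - Bstar ε B0 i) := by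
  rw [Bstar_high h, Bstar_high (h.trans (Nat.le_succ i))]
  push_cast
  rw [show ((tauB ε B0:ℝ) - ((i:ℝ) + 1)) * ε = -ε + ((tauB ε B0:ℝ) - i) * ε by ring,
    Real.exp_add]
  ring

lemma Gstar_rec_high {i : ℕ} (hε : 0 < ε) (hB0 : 0 < B0) (hR0 : 0 ≤ R0)
    (h : tauR ε B0 R0 ≤ i) :
    Gstar ε B0 R0 (i + 1) = Real.exp (-ε) * Gstar ε B0 R0 i := by
  rw [Gstar_high hε hB0 hR0 h, Gstar_high hε hB0 hR0 (h.trans (Nat.le_succ i))]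
  push_cast
  rw [show ((tauR ε B0 R0:ℝ) - ((i:ℝ) + 1)) * ε = -ε + ((tauR ε B0 R0:ℝ) - i) * ε by ring,
    Real.exp_add]
  ring

lemma Rstar_rec_high {i : ℕ} (hε : 0 < ε) (hB0 : 0 < B0) (hR0 : 0 ≤ R0)
    (h : tauB ε B0 ≤ i) :
    Rstar ε B0 R0 (i + 1) = Real.exp (-ε) * Rstar ε B0 R0 i := by
  have hτ : tauR ε B0 R0 ≤ tauB ε B0 := tauR_le_tauB hε hB0 hR0
  rcases eq_or_lt_of_le h with h' | h'
  · rw [← h', Rstar_eq_RMid hτ le_rfl, Rstar, if_neg (by omega), if_neg (by omega)]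
    push_cast
    rw [show -(((tauB ε B0:ℝ) + 1 - (tauB ε B0:ℝ)) * ε) = -ε by ring]
  · rw [Rstar, if_neg (by omega), if_neg (by omega), Rstar, if_neg (by omega),
      if_neg (by omega)]
    push_cast
    rw [show -(((i:ℝ) + 1 - (tauB ε B0:ℝ)) * ε)
        = -ε + -(((i:ℝ) - (tauB ε B0:ℝ)) * ε) by ring, Real.exp_add]
    ring

end FormLemmas
section IneqLemmas
variable {ε B0 R0 : ℝ}

lemma RMid_tauR : RMid ε B0 R0 (tauR ε B0 R0) = Real.exp ((tauR ε B0 R0 : ℝ) * ε) * R0 := by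
  rw [RMid_eq, sub_self, zero_mul, Real.exp_zero]; ring

lemma exp_fac_le_one {τ : ℕ} {i : ℕ} (hε : 0 < ε) (h : τ ≤ i) :
    Real.exp (((τ:ℝ) - i) * ε) ≤ 1 := by
  rw [← Real.exp_zero]
  apply Real.exp_le_exp.mpr
  have h' : (τ:ℝ) - i ≤ 0 := by
    have : (τ:ℝ) ≤ i := by exact_mod_cast h
    linarith
  nlinarith

lemma exp_mono_nat {i j : ℕ} (hε : 0 < ε) (h : i ≤ j) :
    Real.exp ((i:ℝ) * ε) ≤ Real.exp ((j:ℝ) * ε) := by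
  apply Real.exp_le_exp.mpr
  have h' : (i:ℝ) ≤ j := by exact_mod_cast h
  nlinarith

lemma Bstar_bounds (hε : 0 < ε) (hB0 : 0 < B0) (hB1 : B0 ≤ 1) (i : ℕ) :
    0 ≤ Bstar ε B0 i ∧ Bstar ε B0 i ≤ 1 := by
  have hτ1 := expTauB_le_one hε hB0 hB1
  rcases le_or_gt i (tauB ε B0) with h | h
  · rw [Bstar_low h]
    constructor
    · positivity
    · have h2 := exp_mono_nat (i := i) (j := tauB ε B0) hε h
      nlinarith [Real.exp_pos ((i:ℝ) * ε)]
  · rw [Bstar_high h.le]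
    have hq1 : Real.exp (((tauB ε B0:ℝ) - i) * ε) ≤ 1 := exp_fac_le_one hε h.le
    have hq0 : 0 < Real.exp (((tauB ε B0:ℝ) - i) * ε) := Real.exp_pos _
    have hp : 0 < Real.exp ((tauB ε B0:ℝ) * ε) * B0 := by positivity
    have hc0 : 0 ≤ 1 - Real.exp ((tauB ε B0:ℝ) * ε) * B0 := by linarith
    constructor <;> nlinarith [mul_le_mul_of_nonneg_right hq1 hc0,
      mul_nonneg hq0.le hc0]

lemma Bstar_lb (hε : 0 < ε) (hB0 : 0 < B0) (hB1 : B0 ≤ 1) {i : ℕ} (h : tauB ε B0 ≤ i) :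
    Real.exp ((tauB ε B0 : ℝ) * ε) * B0 ≤ Bstar ε B0 i := by
  have hτ1 := expTauB_le_one hε hB0 hB1
  rw [Bstar_high h]
  have hq1 : Real.exp (((tauB ε B0:ℝ) - i) * ε) ≤ 1 := exp_fac_le_one hε h
  have hq0 : 0 < Real.exp (((tauB ε B0:ℝ) - i) * ε) := Real.exp_pos _
  have hc0 : 0 ≤ 1 - Real.exp ((tauB ε B0:ℝ) * ε) * B0 := by linarith
  nlinarith [mul_le_mul_of_nonneg_right hq1 hc0]

lemma RMid_tauB_nonneg (hε : 0 < ε) (hB0 : 0 < B0) (hR0 : 0 ≤ R0) (hs1 : B0 + R0 ≤ 1) :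
    0 ≤ RMid ε B0 R0 (tauB ε B0) := by
  have hτ : tauR ε B0 R0 ≤ tauB ε B0 := tauR_le_tauB hε hB0 hR0
  rcases eq_or_lt_of_le hτ with h' | h'
  · rw [← h', RMid_tauR]; positivity
  · have hs0 : 0 < B0 + R0 := by linarith
    have hτB1 : 1 ≤ tauB ε B0 := by omega
    have h1 : 1 < Real.exp ((tauR ε B0 R0 : ℝ) * ε) * ((B0 + R0) * (Real.exp ε + 1)) := by
      rw [tauR_eq_tauB]; exact tauB_key1 hε hs0
    have hb := expTauB_le_E hε hB0 hτB1
    have hc0 : 0 ≤ 1 - Real.exp ((tauR ε B0 R0:ℝ) * ε) * (B0 + R0) := by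
      have := expTauB_le_one hε hs0 hs1
      rw [tauR_eq_tauB]; linarith
    have hq : Real.exp (((tauR ε B0 R0:ℝ) - tauB ε B0) * ε) ≤ Real.exp (-ε) := by
      apply Real.exp_le_exp.mpr
      have h'' : (tauR ε B0 R0:ℝ) + 1 ≤ tauB ε B0 := by exact_mod_cast h'
      nlinarith
    have hee : Real.exp (-ε) * Real.exp ε = 1 := by
      rw [← Real.exp_add]; simp
    have hE0 : (0:ℝ) < Real.exp ε := Real.exp_pos ε
    have he'0 : (0:ℝ) ≤ Real.exp (-ε) := (Real.exp_pos _).le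
    rw [RMid_eq]
    have hcE : (1 - Real.exp ((tauR ε B0 R0:ℝ) * ε) * (B0 + R0)) * (Real.exp ε + 1)
        ≤ Real.exp ε := by nlinarith
    have k1 : Real.exp (((tauR ε B0 R0:ℝ) - tauB ε B0) * ε)
          * (1 - Real.exp ((tauR ε B0 R0:ℝ) * ε) * (B0 + R0))
        ≤ Real.exp (-ε) * (1 - Real.exp ((tauR ε B0 R0:ℝ) * ε) * (B0 + R0)) :=
      mul_le_mul_of_nonneg_right hq hc0
    have k2 : Real.exp (-ε) * ((1 - Real.exp ((tauR ε B0 R0:ℝ) * ε) * (B0 + R0)) * (Real.exp ε + 1))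
        ≤ Real.exp (-ε) * Real.exp ε := mul_le_mul_of_nonneg_left hcE he'0
    have k3 : Real.exp (((tauR ε B0 R0:ℝ) - tauB ε B0) * ε)
          * (1 - Real.exp ((tauR ε B0 R0:ℝ) * ε) * (B0 + R0)) * (Real.exp ε + 1) ≤ 1 := by
      nlinarith
    nlinarith
end IneqLemmas
section ConvLemmas
variable {ε B0 R0 : ℝ}

lemma RMid_nonneg (hε : 0 < ε) (hB0 : 0 < B0) (hR0 : 0 ≤ R0) (hs1 : B0 + R0 ≤ 1)
    {i : ℕ} (hl : tauR ε B0 R0 ≤ i) (hu : i ≤ tauB ε B0) :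
    0 ≤ RMid ε B0 R0 i := by
  rcases eq_or_lt_of_le hl with h1 | h1
  · rw [← h1, RMid_tauR]; positivity
  rcases eq_or_lt_of_le hu with h2 | h2
  · rw [h2]; exact RMid_tauB_nonneg hε hB0 hR0 hs1
  -- now tauR < i < tauB
  have hd : (0:ℝ) < (tauB ε B0 : ℝ) - tauR ε B0 R0 := by
    have : (tauR ε B0 R0 : ℝ) < tauB ε B0 := by exact_mod_cast h1.trans h2
    linarith
  have hil : (tauR ε B0 R0 : ℝ) < i := by exact_mod_cast h1
  have hiu : (i:ℝ) < tauB ε B0 := by exact_mod_cast h2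
  set L : ℝ := ((tauB ε B0 : ℝ) - i) / ((tauB ε B0 : ℝ) - tauR ε B0 R0) with hLdef
  have hL0 : 0 ≤ L := div_nonneg (by linarith) hd.le
  have hL1 : L ≤ 1 := (div_le_one hd).mpr (by linarith)
  have h1L : (0:ℝ) ≤ 1 - L := by linarith
  -- convexity bounds
  have hcv1 : Real.exp (((tauR ε B0 R0:ℝ) - i) * ε)
      ≤ L * 1 + (1 - L) * Real.exp (((tauR ε B0 R0:ℝ) - tauB ε B0) * ε) := by
    have hc := convexOn_exp.2 (Set.mem_univ (0:ℝ))
      (Set.mem_univ (((tauR ε B0 R0:ℝ) - tauB ε B0) * ε)) hL0 h1L (by ring)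
    simp only [smul_eq_mul, mul_zero, zero_add, Real.exp_zero, mul_one] at hc
    have harg : (1 - L) * (((tauR ε B0 R0:ℝ) - tauB ε B0) * ε)
        = ((tauR ε B0 R0:ℝ) - i) * ε := by
      rw [hLdef]; field_simp; ring
    rw [harg] at hc
    linarith
  have hcv2 : Real.exp ((i:ℝ) * ε)
      ≤ L * Real.exp ((tauR ε B0 R0:ℝ) * ε) + (1 - L) * Real.exp ((tauB ε B0:ℝ) * ε) := by
    have hc := convexOn_exp.2 (Set.mem_univ ((tauR ε B0 R0:ℝ) * ε))
      (Set.mem_univ ((tauB ε B0:ℝ) * ε)) hL0 h1L (by ring)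
    simp only [smul_eq_mul] at hc
    have harg : L * ((tauR ε B0 R0:ℝ) * ε) + (1 - L) * ((tauB ε B0:ℝ) * ε)
        = (i:ℝ) * ε := by
      rw [hLdef]; field_simp; ring
    rw [harg] at hc
    exact hc
  -- endpoint facts
  have hc0 : 0 ≤ 1 - Real.exp ((tauR ε B0 R0:ℝ) * ε) * (B0 + R0) := by
    have := expTauB_le_one hε (by linarith : 0 < B0 + R0) hs1
    rw [tauR_eq_tauB]; linarith
  have fa : 0 ≤ 1 - (1 - Real.exp ((tauR ε B0 R0:ℝ) * ε) * (B0 + R0))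
      - Real.exp ((tauR ε B0 R0:ℝ) * ε) * B0 := by
    have h := mul_nonneg (Real.exp_pos ((tauR ε B0 R0:ℝ) * ε)).le hR0
    nlinarith
  have fb : 0 ≤ 1 - Real.exp (((tauR ε B0 R0:ℝ) - tauB ε B0) * ε)
        * (1 - Real.exp ((tauR ε B0 R0:ℝ) * ε) * (B0 + R0))
      - Real.exp ((tauB ε B0:ℝ) * ε) * B0 := by
    have h := RMid_tauB_nonneg hε hB0 hR0 hs1
    rwa [RMid_eq] at h
  rw [RMid_eq]
  nlinarith [mul_le_mul_of_nonneg_right hcv1 hc0,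
    mul_le_mul_of_nonneg_right hcv2 hB0.le,
    mul_nonneg hL0 fa, mul_nonneg h1L fb]

end ConvLemmas
section StepLemmas
variable {ε B0 R0 : ℝ}

lemma Rstar_nonneg (hε : 0 < ε) (hB0 : 0 < B0) (hR0 : 0 ≤ R0) (hs1 : B0 + R0 ≤ 1) (i : ℕ) :
    0 ≤ Rstar ε B0 R0 i := by
  rw [Rstar]
  split_ifs with h1 h2
  · positivity
  · exact RMid_nonneg hε hB0 hR0 hs1 (by omega) h2
  · have h := RMid_tauB_nonneg hε hB0 hR0 hs1
    positivity

lemma Gstar_nonneg (hε : 0 < ε) (hB0 : 0 < B0) (hR0 : 0 ≤ R0) (hs1 : B0 + R0 ≤ 1) (i : ℕ) :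
    0 ≤ Gstar ε B0 R0 i := by
  have hs0 : (0:ℝ) < B0 + R0 := by linarith
  have hc0 : 0 ≤ 1 - Real.exp ((tauR ε B0 R0:ℝ) * ε) * (B0 + R0) := by
    have := expTauB_le_one hε hs0 hs1
    rw [tauR_eq_tauB]; linarith
  rcases le_or_gt i (tauR ε B0 R0) with h | h
  · rw [Gstar_low hε hB0 hR0 h]
    have h2 := exp_mono_nat (i := i) (j := tauR ε B0 R0) hε h
    nlinarith [Real.exp_pos ((i:ℝ) * ε)]
  · rw [Gstar_high hε hB0 hR0 h.le]
    exact mul_nonneg (Real.exp_pos _).le hc0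

lemma RMid_step (hε : 0 < ε) (hB0 : 0 < B0) (hR0 : 0 ≤ R0) (hs1 : B0 + R0 ≤ 1)
    {i : ℕ} (hl : tauR ε B0 R0 ≤ i) (hu : i + 1 ≤ tauB ε B0) :
    RMid ε B0 R0 i ≤ Real.exp ε * RMid ε B0 R0 (i + 1) ∧
    RMid ε B0 R0 (i + 1) ≤ Real.exp ε * RMid ε B0 R0 i := by
  have hs0 : (0:ℝ) < B0 + R0 := by linarith
  have hE0 : (0:ℝ) < Real.exp ε := Real.exp_pos ε
  have hE1 : (1:ℝ) ≤ Real.exp ε := by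
    rw [← Real.exp_zero]; exact Real.exp_le_exp.mpr hε.le
  have hee : Real.exp (-ε) * Real.exp ε = 1 := by rw [← Real.exp_add]; simp
  have he'0 : (0:ℝ) < Real.exp (-ε) := Real.exp_pos _
  have hτB1 : 1 ≤ tauB ε B0 := by omega
  have hq1 : Real.exp (((tauR ε B0 R0:ℝ) - i) * ε) ≤ 1 := exp_fac_le_one hε hl
  have hq0 : (0:ℝ) < Real.exp (((tauR ε B0 R0:ℝ) - i) * ε) := Real.exp_pos _
  have hc0 : 0 ≤ 1 - Real.exp ((tauR ε B0 R0:ℝ) * ε) * (B0 + R0) := by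
    have := expTauB_le_one hε hs0 hs1
    rw [tauR_eq_tauB]; linarith
  have h1 : 1 < Real.exp ((tauR ε B0 R0 : ℝ) * ε) * ((B0 + R0) * (Real.exp ε + 1)) := by
    rw [tauR_eq_tauB]; exact tauB_key1 hε hs0
  have hcE : (1 - Real.exp ((tauR ε B0 R0:ℝ) * ε) * (B0 + R0)) * (Real.exp ε + 1)
      ≤ Real.exp ε := by nlinarith
  have hXb : Real.exp ((i:ℝ) * ε) * (B0 * (Real.exp ε + 1)) ≤ 1 := by
    have hk := tauB_key2 hε hB0 hτB1
    have hmono : Real.exp ((i:ℝ) * ε) ≤ Real.exp (((tauB ε B0:ℝ) - 1) * ε) := by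
      apply Real.exp_le_exp.mpr
      have : (i:ℝ) + 1 ≤ tauB ε B0 := by exact_mod_cast hu
      nlinarith
    calc Real.exp ((i:ℝ) * ε) * (B0 * (Real.exp ε + 1))
        ≤ Real.exp (((tauB ε B0:ℝ) - 1) * ε) * (B0 * (Real.exp ε + 1)) :=
          mul_le_mul_of_nonneg_right hmono (by positivity)
      _ ≤ 1 := hk
  have e1 : Real.exp (((tauR ε B0 R0:ℝ) - ((i:ℕ) + 1 : ℕ)) * ε)
      = Real.exp (-ε) * Real.exp (((tauR ε B0 R0:ℝ) - i) * ε) := by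
    rw [← Real.exp_add]; push_cast; congr 1; ring
  have e2 : Real.exp ((((i:ℕ) + 1 : ℕ):ℝ) * ε) = Real.exp ε * Real.exp ((i:ℝ) * ε) := by
    rw [← Real.exp_add]; push_cast; congr 1; ring
  have hqc0 : 0 ≤ Real.exp (((tauR ε B0 R0:ℝ) - i) * ε)
      * (1 - Real.exp ((tauR ε B0 R0:ℝ) * ε) * (B0 + R0)) := mul_nonneg hq0.le hc0
  have hqcle : Real.exp (((tauR ε B0 R0:ℝ) - i) * ε)
        * (1 - Real.exp ((tauR ε B0 R0:ℝ) * ε) * (B0 + R0))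
      ≤ 1 - Real.exp ((tauR ε B0 R0:ℝ) * ε) * (B0 + R0) := by
    nlinarith
  have k : Real.exp (((tauR ε B0 R0:ℝ) - i) * ε)
        * (1 - Real.exp ((tauR ε B0 R0:ℝ) * ε) * (B0 + R0)) * (Real.exp ε + 1)
      ≤ Real.exp ε := by nlinarith
  rw [RMid_eq, RMid_eq (i := i + 1), e1, e2]
  constructor
  · nlinarith [hee, hqc0, mul_le_mul_of_nonneg_right hXb (by linarith : (0:ℝ) ≤ Real.exp ε - 1)]
  · nlinarith [hee, hqc0, k, mul_nonneg (by linarith : (0:ℝ) ≤ Real.exp ε - 1)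
      (by linarith [k] : (0:ℝ) ≤ Real.exp ε - Real.exp (((tauR ε B0 R0:ℝ) - i) * ε)
        * (1 - Real.exp ((tauR ε B0 R0:ℝ) * ε) * (B0 + R0)) * (Real.exp ε + 1))]

end StepLemmas
set_option maxHeartbeats 1600000 in

/-- The sequence `(B*_i, R*_i, G*_i)` is itself a feasible sequence:
all entries nonnegative and summing to one, starting at `(B0, R0, G0)`, and satisfying
all the ε-DP constraints between consecutive indices for the three coordinates. -/
theorem star_sequence_feasible (n : ℕ) (hn : 2 ≤ n) (ε : ℝ) (hε : 0 < ε)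
    (B0 R0 G0 : ℝ) (hB0 : 0 < B0) (hR0 : 0 ≤ R0) (hG0 : 0 ≤ G0)
    (hsum : B0 + R0 + G0 = 1) :
    Feasible n ε B0 R0 G0 (Bstar ε B0) (Rstar ε B0 R0) (Gstar ε B0 R0) := by
  have hB1 : B0 ≤ 1 := by linarith
  have hs1 : B0 + R0 ≤ 1 := by linarith
  have hs0 : (0:ℝ) < B0 + R0 := by linarith
  have hτ : tauR ε B0 R0 ≤ tauB ε B0 := tauR_le_tauB hε hB0 hR0
  have hE0 : (0:ℝ) < Real.exp ε := Real.exp_pos ε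
  have hE1 : (1:ℝ) ≤ Real.exp ε := by
    rw [← Real.exp_zero]; exact Real.exp_le_exp.mpr hε.le
  have hee : Real.exp (-ε) * Real.exp ε = 1 := by rw [← Real.exp_add]; simp
  have he'0 : (0:ℝ) < Real.exp (-ε) := Real.exp_pos _
  have he'1 : Real.exp (-ε) ≤ 1 := by
    rw [← Real.exp_zero]; exact Real.exp_le_exp.mpr (by linarith)
  refine ⟨?_, ?_, ?_, ?_, ?_⟩
  · rw [Bstar_low (Nat.zero_le _)]; norm_num
  · rw [Rstar_low (Nat.zero_le _)]; norm_num
  · rw [Gstar, Bstar_low (Nat.zero_le _), Rstar_low (Nat.zero_le _)]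
    push_cast
    rw [zero_mul, Real.exp_zero]
    linarith
  · intro i _
    exact ⟨(Bstar_bounds hε hB0 hB1 i).1, Rstar_nonneg hε hB0 hR0 hs1 i,
      Gstar_nonneg hε hB0 hR0 hs1 i, by rw [Gstar]; ring⟩
  · intro i _
    have hBpair : Bstar ε B0 i ≤ Real.exp ε * Bstar ε B0 (i + 1) ∧
        Bstar ε B0 (i + 1) ≤ Real.exp ε * Bstar ε B0 i := by
      rcases le_or_gt (i + 1) (tauB ε B0) with h | h
      · rw [Bstar_low h, Bstar_low (by omega : i ≤ tauB ε B0),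
          show (((i + 1 : ℕ)):ℝ) * ε = (i:ℝ) * ε + ε by push_cast; ring, Real.exp_add]
        have hx : 0 < Real.exp ((i:ℝ) * ε) * B0 := by positivity
        have hEE : (1:ℝ) ≤ Real.exp ε * Real.exp ε := by nlinarith
        constructor
        · nlinarith [mul_le_mul_of_nonneg_right hEE hx.le]
        · nlinarith
      · have h' : tauB ε B0 ≤ i := by omega
        rw [Bstar_rec h']
        have hlb := Bstar_lb hε hB0 hB1 h'
        have hkey := tauB_key1 hε hB0
        have hb0 : 0 ≤ Bstar ε B0 i := (Bstar_bounds hε hB0 hB1 i).1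
        have hb1 : Bstar ε B0 i ≤ 1 := (Bstar_bounds hε hB0 hB1 i).2
        have hBi1 : 1 ≤ (Real.exp ε + 1) * Bstar ε B0 i := by
          nlinarith [mul_le_mul_of_nonneg_left hlb
            (by positivity : (0:ℝ) ≤ Real.exp ε + 1)]
        constructor
        · nlinarith [hee]
        · nlinarith [hee, mul_nonneg (by linarith : (0:ℝ) ≤ Real.exp ε - 1)
            (by linarith : (0:ℝ) ≤ (Real.exp ε + 1) * Bstar ε B0 i - 1)]
    have hRpair : Rstar ε B0 R0 i ≤ Real.exp ε * Rstar ε B0 R0 (i + 1) ∧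
        Rstar ε B0 R0 (i + 1) ≤ Real.exp ε * Rstar ε B0 R0 i := by
      rcases le_or_gt (i + 1) (tauR ε B0 R0) with h | h
      · rw [Rstar_low h, Rstar_low (by omega : i ≤ tauR ε B0 R0),
          show (((i + 1 : ℕ)):ℝ) * ε = (i:ℝ) * ε + ε by push_cast; ring, Real.exp_add]
        have hx : 0 ≤ Real.exp ((i:ℝ) * ε) * R0 := by positivity
        have hEE : (1:ℝ) ≤ Real.exp ε * Real.exp ε := by nlinarith
        constructor
        · nlinarith [mul_le_mul_of_nonneg_right hEE hx]
        · nlinarith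
      · rcases le_or_gt (i + 1) (tauB ε B0) with h2 | h2
        · have hl : tauR ε B0 R0 ≤ i := by omega
          rw [Rstar_eq_RMid hl (by omega), Rstar_eq_RMid (by omega) h2]
          exact RMid_step hε hB0 hR0 hs1 hl h2
        · have h' : tauB ε B0 ≤ i := by omega
          rw [Rstar_rec_high hε hB0 hR0 h']
          have hr0 : 0 ≤ Rstar ε B0 R0 i := Rstar_nonneg hε hB0 hR0 hs1 i
          have heq : Real.exp ε * (Real.exp (-ε) * Rstar ε B0 R0 i) = Rstar ε B0 R0 i := by
            rw [← mul_assoc, mul_comm (Real.exp ε) (Real.exp (-ε)), hee, one_mul]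
          constructor
          · rw [heq]
          · exact mul_le_mul_of_nonneg_right (he'1.trans hE1) hr0
    have hGpair : Gstar ε B0 R0 i ≤ Real.exp ε * Gstar ε B0 R0 (i + 1) ∧
        Gstar ε B0 R0 (i + 1) ≤ Real.exp ε * Gstar ε B0 R0 i := by
      rcases le_or_gt (i + 1) (tauR ε B0 R0) with h | h
      · rw [Gstar_low hε hB0 hR0 (by omega : i ≤ tauR ε B0 R0), Gstar_low hε hB0 hR0 h,
          show (((i + 1 : ℕ)):ℝ) * ε = (i:ℝ) * ε + ε by push_cast; ring, Real.exp_add]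
        have hτR1 : 1 ≤ tauR ε B0 R0 := by omega
        have hXs : Real.exp ((i:ℝ) * ε) * ((B0 + R0) * (Real.exp ε + 1)) ≤ 1 := by
          have hk : Real.exp (((tauR ε B0 R0:ℝ) - 1) * ε) * ((B0 + R0) * (Real.exp ε + 1)) ≤ 1 := by
            have := tauB_key2 hε hs0 (by rw [← tauR_eq_tauB]; exact hτR1)
            rwa [← tauR_eq_tauB] at this
          have hmono : Real.exp ((i:ℝ) * ε) ≤ Real.exp (((tauR ε B0 R0:ℝ) - 1) * ε) := by
            apply Real.exp_le_exp.mpr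
            have : (i:ℝ) + 1 ≤ tauR ε B0 R0 := by exact_mod_cast h
            nlinarith
          calc Real.exp ((i:ℝ) * ε) * ((B0 + R0) * (Real.exp ε + 1))
              ≤ Real.exp (((tauR ε B0 R0:ℝ) - 1) * ε) * ((B0 + R0) * (Real.exp ε + 1)) :=
                mul_le_mul_of_nonneg_right hmono (by positivity)
            _ ≤ 1 := hk
        constructor
        · nlinarith [mul_le_mul_of_nonneg_right hXs
            (by linarith : (0:ℝ) ≤ Real.exp ε - 1)]
        · nlinarith [Real.exp_pos ((i:ℝ) * ε)]
      · have hl : tauR ε B0 R0 ≤ i := by omega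
        rw [Gstar_rec_high hε hB0 hR0 hl]
        have hg0 : 0 ≤ Gstar ε B0 R0 i := Gstar_nonneg hε hB0 hR0 hs1 i
        have heq : Real.exp ε * (Real.exp (-ε) * Gstar ε B0 R0 i) = Gstar ε B0 R0 i := by
          rw [← mul_assoc, mul_comm (Real.exp ε) (Real.exp (-ε)), hee, one_mul]
        constructor
        · rw [heq]
        · exact mul_le_mul_of_nonneg_right (he'1.trans hE1) hg0
    exact ⟨hBpair.1, hBpair.2, hRpair.1, hRpair.2, hGpair.1, hGpair.2⟩
end

section
/- Fix n ≥ 2, ε > 0, and nonnegative B_0, R_0, G_0 with B_0 > 0 and B_0 + R_0 + G_0 = 1, and define τ_B and (B*_i) as in the context. Let (B_i, R_i, G_i)_{i=0}^{n−1} be a feasible sequence with B_i = B*_i for all i. Then for every i with τ_B < i ≤ n−1: R_i + G_i = e^{−ε}·(R_{i−1} + G_{i−1}), and moreover R_i ≤ e^{−ε}·R_{i−1}. -/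
/-- Along a feasible sequence whose blue coordinate equals `B*`, for every
`τ_B < i ≤ n−1` one has `R_i + G_i = e^{−ε}·(R_{i−1} + G_{i−1})` and `R_i ≤ e^{−ε}·R_{i−1}`. -/
theorem feasible_red_green_last_regime (n : ℕ) (hn : 2 ≤ n) (ε : ℝ) (hε : 0 < ε)
    (B0 R0 G0 : ℝ) (hB0 : 0 < B0) (hR0 : 0 ≤ R0) (hG0 : 0 ≤ G0)
    (hsum : B0 + R0 + G0 = 1)
    (B R G : ℕ → ℝ) (hfeas : Feasible n ε B0 R0 G0 B R G)
    (hB : ∀ i ≤ n - 1, B i = Bstar ε B0 i) :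
    ∀ i, tauB ε B0 < i → i ≤ n - 1 →
      R i + G i = Real.exp (-ε) * (R (i - 1) + G (i - 1)) ∧
      R i ≤ Real.exp (-ε) * R (i - 1) := by
  intro i hτi hin
  obtain ⟨_, _, _, hnn, hdp⟩ := hfeas
  have hi1 : 1 ≤ i := by omega
  have hip : i - 1 ≤ n - 1 := by omega
  have hstep : (i - 1) + 1 ≤ n - 1 := by omega
  have hdp' := hdp (i - 1) hstep
  rw [Nat.sub_add_cancel hi1] at hdp'
  have hsi := (hnn i hin).2.2.2
  have hsp := (hnn (i - 1) hip).2.2.2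
  have hBi := hB i hin
  have hBp := hB (i - 1) hip
  set τ := tauB ε B0 with hτ
  have hee : Real.exp (-ε) * Real.exp ε = 1 := by
    rw [← Real.exp_add]; simp
  have hmain : R i + G i = Real.exp (-ε) * (R (i - 1) + G (i - 1)) := by
    have e1 : R i + G i = 1 - B i := by linarith
    have e2 : R (i - 1) + G (i - 1) = 1 - B (i - 1) := by linarith
    rw [e1, e2, hBi, hBp]
    unfold Bstar
    rw [if_neg (by omega : ¬ i ≤ tauB ε B0)]
    by_cases hc : i - 1 ≤ tauB ε B0
    · have hieq : i = τ + 1 := by omega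
      subst hieq
      rw [if_pos (by omega : τ + 1 - 1 ≤ tauB ε B0)]
      simp only [Nat.add_sub_cancel]
      push_cast
      have a1 : ((τ : ℝ) - ((τ : ℝ) + 1)) * ε = -ε := by ring
      have a2 : (2 * (τ : ℝ) - ((τ : ℝ) + 1)) * ε = -ε + (τ : ℝ) * ε := by ring
      rw [a1, a2, Real.exp_add]
      ring
    · rw [if_neg hc]
      push_cast [Nat.cast_sub hi1]
      have a1 : ((τ : ℝ) - ((i : ℝ) - 1)) * ε = ε + ((τ : ℝ) - (i : ℝ)) * ε := by ring
      have a2 : (2 * (τ : ℝ) - ((i : ℝ) - 1)) * ε = ε + (2 * (τ : ℝ) - (i : ℝ)) * ε := by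
        ring
      rw [a1, a2, Real.exp_add, Real.exp_add]
      linear_combination (Real.exp ((2 * (τ : ℝ) - (i : ℝ)) * ε) * B0
        - Real.exp (((τ : ℝ) - (i : ℝ)) * ε)) * hee
  refine ⟨hmain, ?_⟩
  have hG : G (i - 1) ≤ Real.exp ε * G i := hdp'.2.2.2.2.1
  have hGi : Real.exp (-ε) * G (i - 1) ≤ G i := by
    calc Real.exp (-ε) * G (i - 1) ≤ Real.exp (-ε) * (Real.exp ε * G i) :=
          mul_le_mul_of_nonneg_left hG (Real.exp_pos _).le
      _ = G i := by rw [← mul_assoc, hee, one_mul]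
  linarith
end
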